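/- For every prime p > 5, −2p · ₆F₅[1/2, 1/2, 1/2, 1/2, 1/3, 2/3; 1, 1, 1, 1/6, 5/6; 1]_{p−1} ≡ p · ₆F₅[1/2, 1/2, 1/2, 1/2, 1/3, 2/3; 1, 1, 1, 7/6, 5/6; 1]_{p−1} (mod p); that is, the p-adic valuation of the difference −2p·Σ_{k=0}^{p−1} ((1/2)_k^4 (1/3)_k (2/3)_k)/((1)_k^3 (1/6)_k (5/6)_k · k!) − p·Σ_{k=0}^{p−1} ((1/2)_k^4 (1/3)_k (2/3)_k)/((1)_k^3 (7/6)_k (5/6)_k · k!) is at least 1. -/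

import Mathlib

set_option linter.unusedSectionVars false

/-- The rising factorial (Pochhammer symbol) `(a)_k = a (a+1) ⋯ (a+k-1)`. -/
def risingFact (a : ℚ) (k : ℕ) : ℚ := ∏ i ∈ Finset.range k, (a + i)

namespace SixFive

lemma risingFact_succ (a : ℚ) (k : ℕ) : risingFact a (k+1) = risingFact a k * (a + k) :=
  Finset.prod_range_succ _ _

lemma risingFact_pos {a : ℚ} (ha : 0 < a) (k : ℕ) : 0 < risingFact a k := by
  induction k with
  | zero => simp [risingFact]
  | succ n ih => rw [risingFact_succ]; positivity

lemma risingFact76 (k : ℕ) : risingFact (7/6) k = (6*k+1) * risingFact (1/6) k := by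
  induction k with
  | zero => simp [risingFact]
  | succ n ih =>
    rw [risingFact_succ, risingFact_succ, ih]
    push_cast
    ring

/-- numerator of the step ratio -/
def ng (k : ℕ) : ℕ := (2*k+1)^4*(3*k+1)*(3*k+2)*(4*k+5)
/-- denominator of the step ratio -/
def dg (k : ℕ) : ℕ := 4*(k+1)^4*(6*k+5)*(6*k+7)*(4*k+1)

def u (k : ℕ) : ℚ :=
  (risingFact (1/2) k ^ 4 * risingFact (1/3) k * risingFact (2/3) k) /
    (risingFact 1 k ^ 3 * risingFact (1/6) k * risingFact (5/6) k * (Nat.factorial k : ℚ))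
    * (12*k+3) / (6*k+1)

lemma u_pos (k : ℕ) : 0 < u k := by
  have h1 := risingFact_pos (by norm_num : (0:ℚ) < 1/2) k
  have h2 := risingFact_pos (by norm_num : (0:ℚ) < 1/3) k
  have h3 := risingFact_pos (by norm_num : (0:ℚ) < 2/3) k
  have h4 := risingFact_pos (by norm_num : (0:ℚ) < 1) k
  have h5 := risingFact_pos (by norm_num : (0:ℚ) < 1/6) k
  have h6 := risingFact_pos (by norm_num : (0:ℚ) < 5/6) k
  have h7 : (0:ℚ) < (Nat.factorial k : ℚ) := by
    exact_mod_cast Nat.factorial_pos k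
  have h8 : (0:ℚ) < 12*(k:ℚ)+3 := by positivity
  have h9 : (0:ℚ) < 6*(k:ℚ)+1 := by positivity
  unfold u
  positivity

lemma u_zero : u 0 = 3 := by
  simp [u, risingFact]

lemma u_succ (k : ℕ) : u (k+1) = u k * (ng k) / (dg k) := by
  have h1 := (risingFact_pos (by norm_num : (0:ℚ) < 1/2) k).ne'
  have h2 := (risingFact_pos (by norm_num : (0:ℚ) < 1/3) k).ne'
  have h3 := (risingFact_pos (by norm_num : (0:ℚ) < 2/3) k).ne'
  have h4 := (risingFact_pos (by norm_num : (0:ℚ) < 1) k).ne'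
  have h5 := (risingFact_pos (by norm_num : (0:ℚ) < 1/6) k).ne'
  have h6 := (risingFact_pos (by norm_num : (0:ℚ) < 5/6) k).ne'
  have h7 : ((Nat.factorial k : ℚ)) ≠ 0 := by
    exact_mod_cast (Nat.factorial_pos k).ne'
  have h8 : (6*(k:ℚ)+1) ≠ 0 := by positivity
  have h9 : (6*(k:ℚ)+7) ≠ 0 := by positivity
  have h10 : (12*(k:ℚ)+3) ≠ 0 := by positivity
  have h11 : (12*(k:ℚ)+15) ≠ 0 := by positivity
  have hdg : ((dg k : ℚ)) ≠ 0 := by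
    have : 0 < dg k := by unfold dg; positivity
    exact_mod_cast this.ne'
  unfold u ng dg
  rw [risingFact_succ, risingFact_succ, risingFact_succ, risingFact_succ,
      risingFact_succ, risingFact_succ, Nat.factorial_succ]
  push_cast
  field_simp
  ring

section Count
variable {p : ℕ} [hp : Fact p.Prime]


/-- number of `k < K` with `p ∣ f k` -/
def cnt (p : ℕ) (f : ℕ → ℕ) (K : ℕ) : ℕ := ((Finset.range K).filter (fun k => p ∣ f k)).card

lemma cnt_succ (f : ℕ → ℕ) (K : ℕ) [DecidablePred (fun k => p ∣ f k)] :
    cnt p f (K+1) = cnt p f K + if p ∣ f K then 1 else 0 := by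
  classical
  unfold cnt
  rw [Finset.range_add_one, Finset.filter_insert]
  by_cases h : p ∣ f K <;> simp [h, Finset.card_insert_of_notMem]

lemma cnt_zero (f : ℕ → ℕ) : cnt p f 0 = 0 := by simp [cnt]

lemma cnt_eq_zero {f : ℕ → ℕ} {K : ℕ} (h : ∀ k, k < K → ¬ p ∣ f k) : cnt p f K = 0 := by
  classical
  unfold cnt
  rw [Finset.card_eq_zero, Finset.filter_eq_empty_iff]
  intro k hk
  exact h k (Finset.mem_range.mp hk)

lemma cnt_pos {f : ℕ → ℕ} {K k₀ : ℕ} (hk : k₀ < K) (hd : p ∣ f k₀) : 1 ≤ cnt p f K := by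
  classical
  unfold cnt
  rw [Nat.one_le_iff_ne_zero, ← Nat.pos_iff_ne_zero, Finset.card_pos]
  exact ⟨k₀, Finset.mem_filter.mpr ⟨Finset.mem_range.mpr hk, hd⟩⟩

lemma cnt_exists {f : ℕ → ℕ} {K : ℕ} (h : 1 ≤ cnt p f K) : ∃ k < K, p ∣ f k := by
  classical
  unfold cnt at h
  rw [Nat.one_le_iff_ne_zero, ← Nat.pos_iff_ne_zero, Finset.card_pos] at h
  obtain ⟨k, hk⟩ := h
  rw [Finset.mem_filter, Finset.mem_range] at hk
  exact ⟨k, hk.1, hk.2⟩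

/-- for a linear function `f k = a*k + r` with `p ∤ a`, at most one `k < K ≤ p` has `p ∣ f k`. -/
lemma cnt_le_one {a r K : ℕ} (ha : ¬ p ∣ a) (hK : K ≤ p) :
    cnt p (fun k => a*k + r) K ≤ 1 := by
  classical
  unfold cnt
  apply Finset.card_le_one.mpr
  intro i hi j hj
  rw [Finset.mem_filter, Finset.mem_range] at hi hj
  by_contra hne
  have h1 : (p:ℤ) ∣ (a:ℤ)*i + r := by exact_mod_cast hi.2
  have h2 : (p:ℤ) ∣ (a:ℤ)*j + r := by exact_mod_cast hj.2
  have h3 : (p:ℤ) ∣ (a:ℤ)*((i:ℤ) - j) := by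
    have := dvd_sub h1 h2
    rw [show (a:ℤ)*((i:ℤ) - j) = (a:ℤ)*i + r - ((a:ℤ)*j + r) by ring]; exact this
  have hpa : ¬ (p:ℤ) ∣ (a:ℤ) := by exact_mod_cast ha
  have h4 : (p:ℤ) ∣ ((i:ℤ) - j) :=
    (Int.Prime.dvd_mul' (by exact_mod_cast hp.out) h3).resolve_left hpa
  have h5 : (i:ℤ) - j ≠ 0 := by
    intro h; apply hne; exact_mod_cast sub_eq_zero.mp h
  have h6 : (p:ℤ) ≤ |(i:ℤ) - j| := Int.le_of_dvd (abs_pos.mpr h5) ((dvd_abs _ _).mpr h4)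
  have : |(i:ℤ) - j| < p := by
    rw [abs_sub_lt_iff]
    constructor <;> [skip; skip] <;>
    · have := hi.1; have := hj.1; omega
  omega

lemma cnt_mono {f : ℕ → ℕ} {K K' : ℕ} (h : K ≤ K') : cnt p f K ≤ cnt p f K' := by
  classical
  exact Finset.card_le_card (Finset.filter_subset_filter _ (Finset.range_subset_range.mpr h))


/-- indicator of divisibility -/
def ei (p n : ℕ) : ℕ := if p ∣ n then 1 else 0

lemma norm_nat_eq_one {n : ℕ} (h : ¬ p ∣ n) : padicNorm p n = 1 :=
  (padicNorm.nat_eq_one_iff n).mpr h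

lemma padicNorm_pow (q : ℚ) (n : ℕ) : padicNorm p (q^n) = padicNorm p q ^ n :=
  IsAbsoluteValue.abv_pow (padicNorm p) q n

lemma norm_nat_ge {n : ℕ} (h0 : n ≠ 0) (h2 : n < p^2) :
    (p:ℚ)^(-(ei p n : ℤ)) ≤ padicNorm p n := by
  have hp1 : (1:ℚ) < p := by exact_mod_cast hp.out.one_lt
  unfold ei
  by_cases hd : p ∣ n
  · simp only [hd, if_true]
    obtain ⟨t, rfl⟩ := hd
    have ht0 : t ≠ 0 := by rintro rfl; simp at h0
    have hpt : ¬ p ∣ t := by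
      rintro ⟨s, rfl⟩
      have hs : s ≠ 0 := by rintro rfl; simp at h0
      have : p^2 * s < p^2 := by nlinarith [hp.out.two_le]
      nlinarith [Nat.one_le_iff_ne_zero.mpr hs, hp.out.two_le]
    have hc : ((p * t : ℕ) : ℚ) = (p:ℚ) * (t:ℚ) := by push_cast; ring
    rw [hc, padicNorm.mul, padicNorm.padicNorm_p hp.out.one_lt, norm_nat_eq_one hpt]
    simp
  · rw [norm_nat_eq_one hd]
    simp only [hd, if_false]
    norm_num

lemma ng_pos (k : ℕ) : 0 < ng k := by unfold ng; positivity
lemma dg_pos (k : ℕ) : 0 < dg k := by unfold dg; positivity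

lemma norm_dg_ge {k : ℕ} (h7 : 7 ≤ p) (h2 : 6*k+7 < p^2) (hk : k + 1 < p) :
    (p:ℚ)^(-((ei p (4*k+1) : ℤ) + ei p (6*k+5) + ei p (6*k+7))) ≤ padicNorm p (dg k) := by
  have hcast : ((dg k : ℕ) : ℚ)
      = (4:ℕ) * ((k+1 : ℕ):ℚ)^4 * ((6*k+5 : ℕ):ℚ) * ((6*k+7 : ℕ):ℚ) * ((4*k+1 : ℕ):ℚ) := by
    unfold dg; push_cast; ring
  rw [hcast, padicNorm.mul, padicNorm.mul, padicNorm.mul, padicNorm.mul, padicNorm_pow]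
  have h4 : padicNorm p ((4:ℕ):ℚ) = 1 := norm_nat_eq_one (by
    intro h; have := Nat.le_of_dvd (by norm_num) h; omega)
  have hk1 : padicNorm p ((k+1 : ℕ):ℚ) = 1 := norm_nat_eq_one (by
    intro h; have := Nat.le_of_dvd (by omega) h; omega)
  rw [h4, hk1]
  have b1 := norm_nat_ge (p := p) (n := 6*k+5) (by omega) (by omega)
  have b2 := norm_nat_ge (p := p) (n := 6*k+7) (by omega) (by omega)
  have b3 := norm_nat_ge (p := p) (n := 4*k+1) (by omega) (by nlinarith)
  have hp0 : (0:ℚ) < p := by exact_mod_cast hp.out.pos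
  have hz : ∀ m : ℕ, (0:ℚ) < (p:ℚ)^(-(ei p m : ℤ)) := fun m => zpow_pos hp0 _
  calc (p:ℚ)^(-((ei p (4*k+1) : ℤ) + ei p (6*k+5) + ei p (6*k+7)))
      = (p:ℚ)^(-(ei p (6*k+5):ℤ)) * (p:ℚ)^(-(ei p (6*k+7):ℤ)) * (p:ℚ)^(-(ei p (4*k+1):ℤ)) := by
        rw [← zpow_add₀ hp0.ne', ← zpow_add₀ hp0.ne']; ring_nf
    _ ≤ padicNorm p ((6*k+5 : ℕ):ℚ) * padicNorm p ((6*k+7 : ℕ):ℚ) * padicNorm p ((4*k+1 : ℕ):ℚ) := by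
        apply mul_le_mul (mul_le_mul b1 b2 (le_of_lt (hz _)) (padicNorm.nonneg _)) b3
          (le_of_lt (hz _))
        exact mul_nonneg (padicNorm.nonneg _) (padicNorm.nonneg _)
    _ = 1 * 1^4 * padicNorm p ((6*k+5 : ℕ):ℚ) * padicNorm p ((6*k+7 : ℕ):ℚ) * padicNorm p ((4*k+1 : ℕ):ℚ) := by ring

lemma ei_pow_dvd (n : ℕ) : p ^ ei p n ∣ n := by
  unfold ei; split
  · simpa using (by assumption : p ∣ n)
  · simp

lemma norm_ng_le {k : ℕ} :
    padicNorm p (ng k) ≤ (p:ℚ)^(-((4*(ei p (2*k+1)) + ei p (3*k+1) + ei p (3*k+2) + ei p (4*k+5) : ℕ) : ℤ)) := by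
  have hdvd : p^(4*(ei p (2*k+1)) + ei p (3*k+1) + ei p (3*k+2) + ei p (4*k+5)) ∣ ng k := by
    unfold ng
    rw [pow_add, pow_add, pow_add]
    have h1 : p^(4*ei p (2*k+1)) = (p^(ei p (2*k+1)))^4 := by rw [← pow_mul, mul_comm]
    rw [h1]
    exact mul_dvd_mul (mul_dvd_mul (mul_dvd_mul
      (pow_dvd_pow_of_dvd (ei_pow_dvd _) 4) (ei_pow_dvd _)) (ei_pow_dvd _)) (ei_pow_dvd _)
  have := (padicNorm.dvd_iff_norm_le (p := p)
    (n := 4*(ei p (2*k+1)) + ei p (3*k+1) + ei p (3*k+2) + ei p (4*k+5)) (z := (ng k : ℤ))).mp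
    (by exact_mod_cast hdvd)
  exact_mod_cast this

end Count

section Main
variable {p : ℕ} [hp : Fact p.Prime]

lemma eq_p_of_dvd_odd {n : ℕ} (h7 : 7 ≤ p) (hpo : p % 2 = 1) (hd : p ∣ n) (hno : n % 2 = 1)
    (hub : n < 3*p) (h0 : 0 < n) : n = p := by
  obtain ⟨t, rfl⟩ := hd
  have ht3 : t < 3 := by
    by_contra hc
    push_neg at hc
    have : p * 3 ≤ p * t := Nat.mul_le_mul_left p hc
    omega
  interval_cases t <;> omega

lemma not_dvd_lt {n : ℕ} (h0 : 0 < n) (hn : n < p) : ¬ p ∣ n := by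
  intro h; have := Nat.le_of_dvd h0 h; omega

def DD (p K : ℕ) : ℕ :=
  cnt p (fun k => 4*k+1) K + cnt p (fun k => 6*k+5) K + cnt p (fun k => 6*k+7) K
def NNx (p K : ℕ) : ℕ :=
  4*cnt p (fun k => 2*k+1) K + cnt p (fun k => 3*k+1) K + cnt p (fun k => 3*k+2) K
    + cnt p (fun k => 4*k+5) K

lemma u_norm_le (h7 : 7 ≤ p) : ∀ K, K < p → padicNorm p (u K) ≤ (p:ℚ)^((DD p K : ℤ) - (NNx p K : ℤ)) := by
  have hp0 : (0:ℚ) < p := by exact_mod_cast hp.out.pos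
  have hp1 : (1:ℚ) ≤ p := by exact_mod_cast hp.out.pos
  intro K
  induction K with
  | zero =>
    intro _
    have h3 : u 0 = ((3:ℕ):ℚ) := by rw [u_zero]; norm_num
    rw [h3, norm_nat_eq_one (by intro h; have := Nat.le_of_dvd (by norm_num) h; omega)]
    simp [DD, NNx, cnt_zero]
  | succ K ih =>
    intro hK1
    have ihK := ih (by omega)
    have hng : ((ng K : ℕ):ℚ) ≠ 0 := by exact_mod_cast (ng_pos K).ne'
    have hdg : ((dg K : ℕ):ℚ) ≠ 0 := by exact_mod_cast (dg_pos K).ne'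
    rw [u_succ K, padicNorm.div, padicNorm.mul]
    have hb1 : padicNorm p (u K) * padicNorm p (ng K)
        ≤ (p:ℚ)^((DD p K : ℤ) - (NNx p K : ℤ))
          * (p:ℚ)^(-((4*(ei p (2*K+1)) + ei p (3*K+1) + ei p (3*K+2) + ei p (4*K+5) : ℕ) : ℤ)) :=
      mul_le_mul ihK norm_ng_le (padicNorm.nonneg _) (zpow_pos hp0 _).le
    have hb2 := norm_dg_ge (p := p) (k := K) h7 (by nlinarith) (by omega)
    have hstep := div_le_div₀ (by positivity) hb1 (zpow_pos hp0 _) hb2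
    refine le_trans hstep ?_
    rw [← zpow_add₀ hp0.ne', ← zpow_sub₀ hp0.ne']
    apply zpow_le_zpow_right₀ (le_of_lt (by exact_mod_cast hp.out.one_lt : (1:ℚ) < (p:ℚ)))
    classical
    have e1 : (DD p (K+1) : ℤ)
        = DD p K + (ei p (4*K+1) + ei p (6*K+5) + ei p (6*K+7)) := by
      unfold DD
      rw [cnt_succ, cnt_succ, cnt_succ]
      unfold ei; push_cast; ring
    have e2 : (NNx p (K+1) : ℤ)
        = NNx p K + (4*(ei p (2*K+1)) + ei p (3*K+1) + ei p (3*K+2) + ei p (4*K+5)) := by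
      unfold NNx
      rw [cnt_succ, cnt_succ, cnt_succ, cnt_succ]
      unfold ei; push_cast; ring
    rw [e1, e2]
    push_cast
    linarith

lemma ppos : 0 < p := Fact.out (p := p.Prime) |>.pos

-- Region: band upper half. p+1 ≤ 4K, 6K ≤ 2p-2.
lemma region_band (h7 : 7 ≤ p) (hpo : p % 2 = 1) {K : ℕ} (hb : p+1 ≤ 4*K) (hX : 6*K ≤ 2*p-2) :
    (DD p K : ℤ) - (NNx p K : ℤ) ≤ 1 := by
  have hKp : K ≤ p := by omega
  have c65 : cnt p (fun k => 6*k+5) K + cnt p (fun k => 6*k+7) K ≤ 1 := by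
    by_contra hc
    push_neg at hc
    have h1 : 1 ≤ cnt p (fun k => 6*k+5) K := by
      rcases Nat.eq_zero_or_pos (cnt p (fun k => 6*k+5) K) with h | h
      · exfalso
        have := cnt_mono (p := p) (f := fun k => 6*k+7) (le_refl K)
        have hle := cnt_le_one (p := p) (a := 6) (r := 7) (K := K)
          (by intro hd; have := Nat.le_of_dvd (by norm_num) hd; omega) hKp
        omega
      · exact h
    have h2 : 1 ≤ cnt p (fun k => 6*k+7) K := by
      have hle := cnt_le_one (p := p) (a := 6) (r := 5) (K := K)
        (by intro hd; have := Nat.le_of_dvd (by norm_num) hd; omega) hKp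
      omega
    obtain ⟨k1, hk1, hd1⟩ := cnt_exists h1
    obtain ⟨k2, hk2, hd2⟩ := cnt_exists h2
    have e1 : 6*k1+5 = p := eq_p_of_dvd_odd h7 hpo hd1 (by omega) (by omega) (by omega)
    have e2 : 6*k2+7 = p := eq_p_of_dvd_odd h7 hpo hd2 (by omega) (by omega) (by omega)
    omega
  have c41 : cnt p (fun k => 4*k+1) K ≤ 1 :=
    cnt_le_one (by intro hd; have := Nat.le_of_dvd (by norm_num) hd; omega) hKp
  have h4 : p % 4 = 1 ∨ p % 4 = 3 := by omega
  rcases h4 with h4 | h4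
  · -- p ≡ 1 mod 4 : numerator hit at (p-5)/4
    have hN : 1 ≤ cnt p (fun k => 4*k+5) K := by
      apply cnt_pos (k₀ := (p-5)/4)
      · omega
      · have : 4*((p-5)/4)+5 = p := by omega
        rw [this]
    unfold DD NNx
    omega
  · -- p ≡ 3 mod 4 : no 4k+1 hit
    have c41' : cnt p (fun k => 4*k+1) K = 0 := by
      apply cnt_eq_zero
      intro k hk hd
      have : 4*k+1 = p := eq_p_of_dvd_odd h7 hpo hd (by omega) (by omega) (by omega)
      omega
    unfold DD NNx
    omega

-- Region: middle point for p ≡ 1 mod 4, K = (p-1)/4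
lemma region_mid (h7 : 7 ≤ p) (hpo : p % 2 = 1) (h4 : p % 4 = 1) :
    (DD p ((p-1)/4) : ℤ) - (NNx p ((p-1)/4) : ℤ) ≤ 0 := by
  set K := (p-1)/4 with hK
  have hKp : K ≤ p := by omega
  have c41 : cnt p (fun k => 4*k+1) K = 0 := by
    apply cnt_eq_zero
    intro k hk
    exact not_dvd_lt (by omega) (by omega)
  have c65 : cnt p (fun k => 6*k+5) K + cnt p (fun k => 6*k+7) K ≤ 1 := by
    by_contra hc
    push_neg at hc
    have h1 : 1 ≤ cnt p (fun k => 6*k+5) K := by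
      have hle := cnt_le_one (p := p) (a := 6) (r := 7) (K := K)
        (by intro hd; have := Nat.le_of_dvd (by norm_num) hd; omega) hKp
      omega
    have h2 : 1 ≤ cnt p (fun k => 6*k+7) K := by
      have hle := cnt_le_one (p := p) (a := 6) (r := 5) (K := K)
        (by intro hd; have := Nat.le_of_dvd (by norm_num) hd; omega) hKp
      omega
    obtain ⟨k1, hk1, hd1⟩ := cnt_exists h1
    obtain ⟨k2, hk2, hd2⟩ := cnt_exists h2
    have e1 : 6*k1+5 = p := eq_p_of_dvd_odd h7 hpo hd1 (by omega) (by omega) (by omega)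
    have e2 : 6*k2+7 = p := eq_p_of_dvd_odd h7 hpo hd2 (by omega) (by omega) (by omega)
    omega
  have hN : 1 ≤ cnt p (fun k => 4*k+5) K := by
    apply cnt_pos (k₀ := K - 1)
    · omega
    · have : 4*(K-1)+5 = p := by omega
      rw [this]
  unfold DD NNx
  omega

-- Region: after band exit: p ≤ 3K, 2K ≤ p-1
lemma region_exit (h7 : 7 ≤ p) (hpo : p % 2 = 1) {K : ℕ} (hb : p ≤ 3*K) (hm : 2*K ≤ p-1) :
    (DD p K : ℤ) - (NNx p K : ℤ) ≤ 0 := by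
  have hKp : K ≤ p := by omega
  have c65 : cnt p (fun k => 6*k+5) K + cnt p (fun k => 6*k+7) K ≤ 1 := by
    by_contra hc
    push_neg at hc
    have h1 : 1 ≤ cnt p (fun k => 6*k+5) K := by
      have hle := cnt_le_one (p := p) (a := 6) (r := 7) (K := K)
        (by intro hd; have := Nat.le_of_dvd (by norm_num) hd; omega) hKp
      omega
    have h2 : 1 ≤ cnt p (fun k => 6*k+7) K := by
      have hle := cnt_le_one (p := p) (a := 6) (r := 5) (K := K)
        (by intro hd; have := Nat.le_of_dvd (by norm_num) hd; omega) hKp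
      omega
    obtain ⟨k1, hk1, hd1⟩ := cnt_exists h1
    obtain ⟨k2, hk2, hd2⟩ := cnt_exists h2
    have e1 : 6*k1+5 = p := eq_p_of_dvd_odd h7 hpo hd1 (by omega) (by omega) (by omega)
    have e2 : 6*k2+7 = p := eq_p_of_dvd_odd h7 hpo hd2 (by omega) (by omega) (by omega)
    omega
  -- numerator exit hit
  have h3 : p % 3 = 1 ∨ p % 3 = 2 := by
    have hnd : ¬ (3 ∣ p) := by
      intro h
      have := (Nat.prime_dvd_prime_iff_eq (by norm_num) hp.out).mp h
      omega
    omega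
  have hN1 : 1 ≤ cnt p (fun k => 3*k+1) K + cnt p (fun k => 3*k+2) K := by
    rcases h3 with h3 | h3
    · have : 1 ≤ cnt p (fun k => 3*k+1) K := by
        apply cnt_pos (k₀ := (p-1)/3)
        · omega
        · have : 3*((p-1)/3)+1 = p := by omega
          rw [this]
      omega
    · have : 1 ≤ cnt p (fun k => 3*k+2) K := by
        apply cnt_pos (k₀ := (p-2)/3)
        · omega
        · have : 3*((p-2)/3)+2 = p := by omega
          rw [this]
      omega
  have h4 : p % 4 = 1 ∨ p % 4 = 3 := by omega
  rcases h4 with h4 | h4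
  · have c41 : cnt p (fun k => 4*k+1) K ≤ 1 :=
      cnt_le_one (by intro hd; have := Nat.le_of_dvd (by norm_num) hd; omega) hKp
    have hN2 : 1 ≤ cnt p (fun k => 4*k+5) K := by
      apply cnt_pos (k₀ := (p-5)/4)
      · omega
      · have : 4*((p-5)/4)+5 = p := by omega
        rw [this]
    unfold DD NNx
    omega
  · have c41 : cnt p (fun k => 4*k+1) K = 0 := by
      apply cnt_eq_zero
      intro k hk hd
      have : 4*k+1 = p := eq_p_of_dvd_odd h7 hpo hd (by omega) (by omega) (by omega)
      omega
    unfold DD NNx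
    omega

-- Region: small K (before band): 6K ≤ p-2
lemma region_small (h7 : 7 ≤ p) {K : ℕ} (hK : 6*K ≤ p-2) :
    (DD p K : ℤ) - (NNx p K : ℤ) ≤ 0 := by
  have c1 : cnt p (fun k => 4*k+1) K = 0 :=
    cnt_eq_zero (fun k hk => not_dvd_lt (by omega) (by omega))
  have c2 : cnt p (fun k => 6*k+5) K = 0 :=
    cnt_eq_zero (fun k hk => not_dvd_lt (by omega) (by omega))
  have c3 : cnt p (fun k => 6*k+7) K = 0 :=
    cnt_eq_zero (fun k hk => not_dvd_lt (by omega) (by omega))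
  unfold DD NNx
  omega

-- Region: large K: p ≤ 2K, K ≤ p-1
lemma region_large (h7 : 7 ≤ p) (hpo : p % 2 = 1) {K : ℕ} (hb : p ≤ 2*K) (hK : K ≤ p - 1) :
    (DD p K : ℤ) - (NNx p K : ℤ) ≤ 0 := by
  have hKp : K ≤ p := by omega
  have c1 : cnt p (fun k => 4*k+1) K ≤ 1 :=
    cnt_le_one (by intro hd; have := Nat.le_of_dvd (by norm_num) hd; omega) hKp
  have c2 : cnt p (fun k => 6*k+5) K ≤ 1 :=
    cnt_le_one (by intro hd; have := Nat.le_of_dvd (by norm_num) hd; omega) hKp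
  have c3 : cnt p (fun k => 6*k+7) K ≤ 1 :=
    cnt_le_one (by intro hd; have := Nat.le_of_dvd (by norm_num) hd; omega) hKp
  have hN : 1 ≤ cnt p (fun k => 2*k+1) K := by
    apply cnt_pos (k₀ := (p-1)/2)
    · omega
    · have : 2*((p-1)/2)+1 = p := by omega
      rw [this]
  unfold DD NNx
  omega

end Main

section Rpart
variable {p : ℕ} [hp : Fact p.Prime]

def nga (r : ℕ) : ℕ := (2*r+1)^4*(3*r+1)*(3*r+2)
def dgb (r : ℕ) : ℕ := 4*(r+2)^4*(6*r+11)*(6*r+13)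

lemma nga_pos (r : ℕ) : 0 < nga r := by unfold nga; positivity
lemma dgb_pos (r : ℕ) : 0 < dgb r := by unfold dgb; positivity

lemma zstep {k x : ℕ} (hrel : 2*x + 2*k + 3 = p) :
    (p:ℤ) ∣ ((ng k * ng x : ℕ) : ℤ) - ((dg k * dg x : ℕ) : ℤ) := by
  apply (ZMod.intCast_zmod_eq_zero_iff_dvd _ p).mp
  have h0 : ((2*x + 2*k + 3 : ℕ) : ZMod p) = 0 := by rw [hrel]; exact ZMod.natCast_self p
  push_cast at h0
  unfold ng dg
  push_cast
  linear_combination ((-6500)*1 + (-60930)*(x:ZMod p) + (-214870)*(x:ZMod p)^2 + (-381540)*(x:ZMod p)^3 + (-367240)*(x:ZMod p)^4 + (-183600)*(x:ZMod p)^5 + (-37440)*(x:ZMod p)^6 + (-60930)*(k:ZMod p) + (-573685)*(k:ZMod p)*(x:ZMod p) + (-2035743)*(k:ZMod p)*(x:ZMod p)^2 + (-3641730)*(k:ZMod p)*(x:ZMod p)^3 + (-3534684)*(k:ZMod p)*(x:ZMod p)^4 + (-1783368)*(k:ZMod p)*(x:ZMod p)^5 + (-367200)*(k:ZMod p)*(x:ZMod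 p)^6 + (-214870)*(k:ZMod p)^2 + (-2035743)*(k:ZMod p)^2*(x:ZMod p) + (-7286929)*(k:ZMod p)^2*(x:ZMod p)^2 + (-13170162)*(k:ZMod p)^2*(x:ZMod p)^3 + (-12930628)*(k:ZMod p)^2*(x:ZMod p)^4 + (-6605064)*(k:ZMod p)^2*(x:ZMod p)^5 + (-1377504)*(k:ZMod p)^2*(x:ZMod p)^6 + (-381540)*(k:ZMod p)^3 + (-3641730)*(k:ZMod p)^3*(x:ZMod p) + (-13170162)*(k:ZMod p)^3*(x:ZMod p)^2 + (-24093880)*(k:ZMod p)^3*(x:ZMod p)^3 + (-23977464)*(k:ZMod p)^3*(x:ZMod p)^4 + (-12426048)*(k:ZMod p)^3*(x:ZMod p)^5 + (-2630016)*(k:ZMod p)^3*(x:ZMod p)^6 + (-367240)*(k:ZMod p)^4 + (-3534684)*(k:ZMod p)^4*(x:ZMod p) + (-12930628)*(k:ZMod p)^4*(x:ZMod p)^2 + (-23977464)*(k:ZMod p)^4*(x:ZMod p)^3 + (-24221648)*(k:ZMod p)^4*(x:ZMod p)^4 + (-12753504)*(k:ZMod p)^4*(x:ZMod p)^5 + (-2742912)*(k:ZMod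 p)^4*(x:ZMod p)^6 + (-183600)*(k:ZMod p)^5 + (-1783368)*(k:ZMod p)^5*(x:ZMod p) + (-6605064)*(k:ZMod p)^5*(x:ZMod p)^2 + (-12426048)*(k:ZMod p)^5*(x:ZMod p)^3 + (-12753504)*(k:ZMod p)^5*(x:ZMod p)^4 + (-6827904)*(k:ZMod p)^5*(x:ZMod p)^5 + (-1492992)*(k:ZMod p)^5*(x:ZMod p)^6 + (-37440)*(k:ZMod p)^6 + (-367200)*(k:ZMod p)^6*(x:ZMod p) + (-1377504)*(k:ZMod p)^6*(x:ZMod p)^2 + (-2630016)*(k:ZMod p)^6*(x:ZMod p)^3 + (-2742912)*(k:ZMod p)^6*(x:ZMod p)^4 + (-1492992)*(k:ZMod p)^6*(x:ZMod p)^5 + (-331776)*(k:ZMod p)^6*(x:ZMod p)^6) * h0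

lemma zbase3 {q : ℕ} (hrel : 4*q + 3 = p) :
    (p:ℤ) ∣ ((ng q : ℕ) : ℤ) + ((dg q : ℕ) : ℤ) := by
  apply (ZMod.intCast_zmod_eq_zero_iff_dvd _ p).mp
  have h0 : ((4*q + 3 : ℕ) : ZMod p) = 0 := by rw [hrel]; exact ZMod.natCast_self p
  push_cast at h0
  unfold ng dg
  push_cast
  linear_combination ((50)*1 + (447)*(q:ZMod p) + (1495)*(q:ZMod p)^2 + (2568)*(q:ZMod p)^3 + (2476)*(q:ZMod p)^4 + (1296)*(q:ZMod p)^5 + (288)*(q:ZMod p)^6) * h0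

lemma zbase1 {r : ℕ} (hrel : 4*r + 5 = p) :
    (p:ℤ) ∣ ((nga r * ng (r+1) : ℕ) : ℤ) + ((dg r * dgb r : ℕ) : ℤ) := by
  apply (ZMod.intCast_zmod_eq_zero_iff_dvd _ p).mp
  have h0 : ((4*r + 5 : ℕ) : ZMod p) = 0 := by rw [hrel]; exact ZMod.natCast_self p
  push_cast at h0
  unfold nga ng dg dgb
  push_cast
  linear_combination ((262088)*1 + (3237010)*(r:ZMod p) + (16994429)*(r:ZMod p)^2 + (51437700)*(r:ZMod p)^3 + (101406165)*(r:ZMod p)^4 + (138471440)*(r:ZMod p)^5 + (135214192)*(r:ZMod p)^6 + (95633600)*(r:ZMod p)^7 + (48821360)*(r:ZMod p)^8 + (17596800)*(r:ZMod p)^9 + (4258944)*(r:ZMod p)^10 + (622080)*(r:ZMod p)^11 + (41472)*(r:ZMod p)^12) * h0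

lemma norm_int_le_inv {z : ℤ} (h : (p:ℤ) ∣ z) : padicNorm p (z : ℚ) ≤ (p:ℚ)^(-1:ℤ) := by
  have := (padicNorm.dvd_iff_norm_le (p := p) (n := 1) (z := z)).mp (by simpa using h)
  simpa using this

lemma not_dvd_ng {k : ℕ} (h1 : ¬p ∣ 2*k+1) (h2 : ¬p ∣ 3*k+1) (h3 : ¬p ∣ 3*k+2)
    (h4 : ¬p ∣ 4*k+5) : ¬ p ∣ ng k := by
  unfold ng
  intro h
  rcases (hp.out.dvd_mul).mp h with h | h
  · rcases (hp.out.dvd_mul).mp h with h | h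
    · rcases (hp.out.dvd_mul).mp h with h | h
      · exact h1 (hp.out.dvd_of_dvd_pow h)
      · exact h2 h
    · exact h3 h
  · exact h4 h

lemma not_dvd_nga {r : ℕ} (h1 : ¬p ∣ 2*r+1) (h2 : ¬p ∣ 3*r+1) (h3 : ¬p ∣ 3*r+2) :
    ¬ p ∣ nga r := by
  unfold nga
  intro h
  rcases (hp.out.dvd_mul).mp h with h | h
  · rcases (hp.out.dvd_mul).mp h with h | h
    · exact h1 (hp.out.dvd_of_dvd_pow h)
    · exact h2 h
  · exact h3 h

/-- the key band congruence: `1 + u(m-K)/u(K) ≡ 0 mod p` for `K` in the upper band. -/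
lemma R_band (h7 : 7 ≤ p) (hpo : p % 2 = 1) :
    ∀ K, (p+3)/4 ≤ K → (6*K ≤ 2*p-2 →
      padicNorm p (1 + u ((p-1)/2 - K) / u K) ≤ (p:ℚ)^(-1:ℤ)) := by
  have hp0 : (0:ℚ) < p := by exact_mod_cast hp.out.pos
  intro K hK
  induction K, hK using Nat.le_induction with
  | base =>
    intro h6
    have h4 : p % 4 = 1 ∨ p % 4 = 3 := by omega
    rcases h4 with h4 | h4
    · -- p = 4r+5
      set r := (p-5)/4 with hr
      have hp4 : p = 4*r + 5 := by omega
      have hb4 : (p+3)/4 = r + 2 := by omega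
      have hmb : (p-1)/2 - ((p+3)/4) = r := by omega
      rw [hmb, hb4]
      have hu1 : u (r+2) = u (r+1) * ng (r+1) / dg (r+1) := u_succ (r+1)
      have hu0 : u (r+1) = u r * ng r / dg r := u_succ r
      have hung : ng r = nga r * (4*r+5) := by unfold ng nga; ring
      have hudg : dg (r+1) = dgb r * (4*r+5) := by unfold dg dgb; ring
      have hne1 : (u r) ≠ 0 := (u_pos r).ne'
      have hnngr1 : ((ng (r+1) : ℕ):ℚ) ≠ 0 := by exact_mod_cast (ng_pos (r+1)).ne'
      have hndgr : ((dg r : ℕ):ℚ) ≠ 0 := by exact_mod_cast (dg_pos r).ne'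
      have hnnga : ((nga r : ℕ):ℚ) ≠ 0 := by exact_mod_cast (nga_pos r).ne'
      have hndgb : ((dgb r : ℕ):ℚ) ≠ 0 := by exact_mod_cast (dgb_pos r).ne'
      have hn45 : ((4*r+5 : ℕ):ℚ) ≠ 0 := by
        have : (0:ℕ) < 4*r+5 := by omega
        exact_mod_cast this.ne'
      have hform : 1 + u r / u (r+2)
          = (((nga r * ng (r+1) : ℕ) : ℚ) + ((dg r * dgb r : ℕ) : ℚ)) / ((nga r * ng (r+1) : ℕ) : ℚ) := by
        have h1 : ((ng r : ℕ):ℚ) = ((nga r : ℕ):ℚ) * ((4*r+5 : ℕ):ℚ) := by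
          rw [hung, Nat.cast_mul]
        have h2 : ((dg (r+1) : ℕ):ℚ) = ((dgb r : ℕ):ℚ) * ((4*r+5 : ℕ):ℚ) := by
          rw [hudg, Nat.cast_mul]
        rw [hu1, hu0, h1, h2, Nat.cast_mul, Nat.cast_mul]
        field_simp
      rw [hform, padicNorm.div]
      have hnum : padicNorm p ((((nga r * ng (r+1) : ℕ) : ℚ) + ((dg r * dgb r : ℕ) : ℚ))) ≤ (p:ℚ)^(-1:ℤ) := by
        have hz := zbase1 (p := p) (r := r) (by omega)
        have hc : (((nga r * ng (r+1) : ℕ) : ℤ) + ((dg r * dgb r : ℕ) : ℤ) : ℚ)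
            = (((nga r * ng (r+1) : ℕ) + ((dg r * dgb r : ℕ)) : ℚ)) := by push_cast; ring
        have := norm_int_le_inv (p := p) hz
        rw [← hc]
        convert this using 2
        push_cast
        ring
      have hden : padicNorm p (((nga r * ng (r+1) : ℕ) : ℚ)) = 1 := by
        apply norm_nat_eq_one
        intro h
        rcases (hp.out.dvd_mul).mp h with h | h
        · exact not_dvd_nga (not_dvd_lt (by omega) (by omega)) (not_dvd_lt (by omega) (by omega))
            (not_dvd_lt (by omega) (by omega)) h
        · apply not_dvd_ng (k := r+1) (not_dvd_lt (by omega) (by omega))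
            (not_dvd_lt (by omega) (by omega)) (not_dvd_lt (by omega) (by omega)) ?_ h
          intro hd
          have := eq_p_of_dvd_odd h7 hpo hd (by omega) (by omega) (by omega)
          omega
      rw [hden, div_one]
      exact hnum
    · -- p = 4q+3
      set q := (p-3)/4 with hq
      have hp4 : p = 4*q + 3 := by omega
      have hb4 : (p+3)/4 = q + 1 := by omega
      have hmb : (p-1)/2 - ((p+3)/4) = q := by omega
      rw [hmb, hb4]
      have hu0 : u (q+1) = u q * ng q / dg q := u_succ q
      have hne1 : (u q) ≠ 0 := (u_pos q).ne'
      have hnng : ((ng q : ℕ):ℚ) ≠ 0 := by exact_mod_cast (ng_pos q).ne'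
      have hndg : ((dg q : ℕ):ℚ) ≠ 0 := by exact_mod_cast (dg_pos q).ne'
      have hform : 1 + u q / u (q+1) = (((ng q : ℕ) : ℚ) + ((dg q : ℕ) : ℚ)) / ((ng q : ℕ) : ℚ) := by
        rw [hu0]
        field_simp
      rw [hform, padicNorm.div]
      have hnum : padicNorm p (((ng q : ℕ) : ℚ) + ((dg q : ℕ) : ℚ)) ≤ (p:ℚ)^(-1:ℤ) := by
        have hz := zbase3 (p := p) (q := q) (by omega)
        have := norm_int_le_inv (p := p) hz
        convert this using 2
        push_cast
        ring
      have hden : padicNorm p (((ng q : ℕ) : ℚ)) = 1 := by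
        apply norm_nat_eq_one
        apply not_dvd_ng (not_dvd_lt (by omega) (by omega)) (not_dvd_lt (by omega) (by omega))
          (not_dvd_lt (by omega) (by omega))
        intro hd
        have := eq_p_of_dvd_odd h7 hpo hd (by omega) (by omega) (by omega)
        omega
      rw [hden, div_one]
      exact hnum
  | succ K hbK ih =>
    intro h6
    have h6K : 6*K ≤ 2*p - 2 := by omega
    have ihK := ih (by omega)
    set m := (p-1)/2 with hm
    have hm2 : 2*m + 1 = p := by omega
    have hKm : K + 1 < m := by omega
    set x := m - 1 - K with hx
    have hrel : 2*x + 2*K + 3 = p := by omega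
    have hmK1 : m - (K+1) = x := by omega
    have hmK : m - K = x + 1 := by omega
    -- express u (m - (K+1)) via u (m - K)
    have hux : u (x+1) = u x * ng x / dg x := u_succ x
    have huK : u (K+1) = u K * ng K / dg K := u_succ K
    have hne_uK : u K ≠ 0 := (u_pos K).ne'
    have hne_ux : u x ≠ 0 := (u_pos x).ne'
    have hnngK : ((ng K : ℕ):ℚ) ≠ 0 := by exact_mod_cast (ng_pos K).ne'
    have hndgK : ((dg K : ℕ):ℚ) ≠ 0 := by exact_mod_cast (dg_pos K).ne'
    have hnngx : ((ng x : ℕ):ℚ) ≠ 0 := by exact_mod_cast (ng_pos x).ne'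
    have hndgx : ((dg x : ℕ):ℚ) ≠ 0 := by exact_mod_cast (dg_pos x).ne'
    have hsplit : 1 + u (m - (K+1)) / u (K+1)
        = ((((ng K * ng x : ℕ) : ℚ) - ((dg K * dg x : ℕ) : ℚ))
            + ((dg K * dg x : ℕ) : ℚ) * (1 + u (m - K) / u K)) / ((ng K * ng x : ℕ) : ℚ) := by
      rw [hmK1, hmK, hux, huK]
      push_cast
      field_simp
      ring
    rw [hsplit, padicNorm.div]
    have hden : padicNorm p ((ng K * ng x : ℕ) : ℚ) = 1 := by
      apply norm_nat_eq_one
      intro h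
      rcases (hp.out.dvd_mul).mp h with h | h
      · apply not_dvd_ng (k := K) (not_dvd_lt (by omega) (by omega))
          (not_dvd_lt (by omega) (by omega)) (not_dvd_lt (by omega) (by omega)) ?_ h
        intro hd
        have := eq_p_of_dvd_odd h7 hpo hd (by omega) (by omega) (by omega)
        omega
      · exact not_dvd_ng (k := x) (not_dvd_lt (by omega) (by omega))
          (not_dvd_lt (by omega) (by omega)) (not_dvd_lt (by omega) (by omega))
          (not_dvd_lt (by omega) (by omega)) h
    rw [hden, div_one]
    apply le_trans padicNorm.nonarchimedean
    apply max_le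
    · have hz := zstep (p := p) hrel
      have := norm_int_le_inv (p := p) hz
      rw [Int.cast_sub, Int.cast_natCast, Int.cast_natCast] at this
      exact this
    · rw [padicNorm.mul]
      calc padicNorm p ((dg K * dg x : ℕ) : ℚ) * padicNorm p (1 + u (m - K) / u K)
          ≤ 1 * ((p:ℚ)^(-1:ℤ)) := by
            apply mul_le_mul (padicNorm.of_nat _) ihK (padicNorm.nonneg _) (by norm_num)
        _ = (p:ℚ)^(-1:ℤ) := by ring

end Rpart

section Final
variable {p : ℕ} [hp : Fact p.Prime]

lemma pair_norm_le (h7 : 7 ≤ p) (hpo : p % 2 = 1) {K : ℕ} (h2K : (p-1)/2 ≤ 2*K)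
    (hKm : K ≤ (p-1)/2) :
    padicNorm p (u ((p-1)/2 - K) + u K) ≤ 1 := by
  have hp1 : (1:ℚ) ≤ p := by exact_mod_cast hp.out.one_lt.le
  set m := (p-1)/2 with hm
  by_cases hexit : p ≤ 3*K
  · apply le_trans padicNorm.nonarchimedean
    apply max_le
    · calc padicNorm p (u (m-K))
          ≤ (p:ℚ)^((DD p (m-K) : ℤ) - NNx p (m-K)) := u_norm_le h7 (m-K) (by omega)
        _ ≤ (p:ℚ)^(0:ℤ) := zpow_le_zpow_right₀ hp1 (region_small h7 (by omega))
        _ = 1 := zpow_zero _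
    · calc padicNorm p (u K)
          ≤ (p:ℚ)^((DD p K : ℤ) - NNx p K) := u_norm_le h7 K (by omega)
        _ ≤ (p:ℚ)^(0:ℤ) := zpow_le_zpow_right₀ hp1 (region_exit h7 hpo hexit (by omega))
        _ = 1 := zpow_zero _
  · push_neg at hexit
    by_cases hmid : p % 4 = 1 ∧ 4*K + 1 = p
    · have hKK : m - K = K := by omega
      have hK4 : K = (p-1)/4 := by omega
      rw [hKK]
      have h2u : u K + u K = (2:ℚ) * u K := by ring
      rw [h2u, padicNorm.mul]
      have hn2 : padicNorm p (2:ℚ) = 1 := by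
        have hc : ((2:ℕ):ℚ) = (2:ℚ) := by norm_num
        rw [← hc]
        exact norm_nat_eq_one (by intro h; have := Nat.le_of_dvd (by norm_num) h; omega)
      rw [hn2, one_mul]
      have hreg := region_mid h7 hpo hmid.1
      rw [← hK4] at hreg
      calc padicNorm p (u K)
          ≤ (p:ℚ)^((DD p K : ℤ) - NNx p K) := u_norm_le h7 K (by omega)
        _ ≤ (p:ℚ)^(0:ℤ) := zpow_le_zpow_right₀ hp1 hreg
        _ = 1 := zpow_zero _
    · have hbK : (p+3)/4 ≤ K := by omega
      have h6K : 6*K ≤ 2*p-2 := by omega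
      have hRb := R_band h7 hpo K hbK h6K
      have huK : padicNorm p (u K) ≤ (p:ℚ)^(1:ℤ) :=
        le_trans (u_norm_le h7 K (by omega))
          (zpow_le_zpow_right₀ hp1 (region_band h7 hpo (by omega) h6K))
      have hne : u K ≠ 0 := (u_pos K).ne'
      have hfact : u (m - K) + u K = u K * (1 + u (m-K)/u K) := by
        field_simp
        ring
      rw [hfact, padicNorm.mul]
      have hp0 : (0:ℚ) < p := by exact_mod_cast hp.out.pos
      calc padicNorm p (u K) * padicNorm p (1 + u (m-K)/u K)
          ≤ (p:ℚ)^(1:ℤ) * (p:ℚ)^(-1:ℤ) :=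
            mul_le_mul huK hRb (padicNorm.nonneg _) (zpow_pos hp0 _).le
        _ = 1 := by
            rw [← zpow_add₀ hp0.ne']
            norm_num

lemma sum_norm_le (h7 : 7 ≤ p) (hpo : p % 2 = 1) :
    padicNorm p (∑ k ∈ Finset.range p, u k) ≤ 1 := by
  have hp1 : (1:ℚ) ≤ p := by exact_mod_cast hp.out.one_lt.le
  set m := (p-1)/2 with hm
  have hsplit : ∑ k ∈ Finset.range p, u k
      = (∑ k ∈ Finset.range (m+1), u k) + (∑ k ∈ Finset.Ico (m+1) p, u k) := by
    rw [Finset.range_eq_Ico]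
    rw [Finset.range_eq_Ico]
    exact (Finset.sum_Ico_consecutive u (Nat.zero_le (m+1)) (by omega : m+1 ≤ p)).symm
  rw [hsplit]
  apply le_trans padicNorm.nonarchimedean
  apply max_le
  · -- upper sum via pairing
    have hreflect : ∑ k ∈ Finset.range (m+1), u (m - k) = ∑ k ∈ Finset.range (m+1), u k := by
      have := Finset.sum_range_reflect (fun k => u k) (m+1)
      simpa using this
    have hdouble : ∑ k ∈ Finset.range (m+1), u k
        = (2:ℚ)⁻¹ * ∑ k ∈ Finset.range (m+1), (u (m - k) + u k) := by
      rw [Finset.sum_add_distrib, hreflect]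
      ring
    rw [hdouble, padicNorm.mul]
    have hn2 : padicNorm p ((2:ℚ)⁻¹) = 1 := by
      rw [← one_div, padicNorm.div, padicNorm.one]
      have hc : ((2:ℕ):ℚ) = (2:ℚ) := by norm_num
      rw [← hc, norm_nat_eq_one (by intro h; have := Nat.le_of_dvd (by norm_num) h; omega)]
      norm_num
    rw [hn2, one_mul]
    apply padicNorm.sum_le' _ (by norm_num)
    intro k hk
    rw [Finset.mem_range] at hk
    rcases le_or_gt m (2*k) with h2k | h2k
    · exact pair_norm_le h7 hpo h2k (by omega)
    · have hpair := pair_norm_le h7 hpo (K := m - k) (by omega) (by omega)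
      have hkk : m - (m - k) = k := by omega
      rw [hkk] at hpair
      calc padicNorm p (u (m - k) + u k) = padicNorm p (u k + u (m - k)) := by rw [add_comm]
        _ ≤ 1 := hpair
  · apply padicNorm.sum_le' _ (by norm_num)
    intro k hk
    rw [Finset.mem_Ico] at hk
    calc padicNorm p (u k)
        ≤ (p:ℚ)^((DD p k : ℤ) - NNx p k) := u_norm_le h7 k (by omega)
      _ ≤ (p:ℚ)^(0:ℤ) := zpow_le_zpow_right₀ hp1 (region_large h7 hpo (by omega) (by omega))
      _ = 1 := zpow_zero _

lemma term_ident (h7 : 7 ≤ p) (k : ℕ) :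
    (-2 * (p:ℚ)) * ((risingFact (1 / 2) k ^ 4 * risingFact (1 / 3) k * risingFact (2 / 3) k) /
            (risingFact 1 k ^ 3 * risingFact (1 / 6) k * risingFact (5 / 6) k *
              (Nat.factorial k : ℚ)) * 1 ^ k) -
      (p : ℚ) * ((risingFact (1 / 2) k ^ 4 * risingFact (1 / 3) k * risingFact (2 / 3) k) /
            (risingFact 1 k ^ 3 * risingFact (7 / 6) k * risingFact (5 / 6) k *
              (Nat.factorial k : ℚ)) * 1 ^ k)
     = -(p:ℚ) * u k := by
  have h1 := (risingFact_pos (by norm_num : (0:ℚ) < 1/2) k).ne'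
  have h2 := (risingFact_pos (by norm_num : (0:ℚ) < 1/3) k).ne'
  have h3 := (risingFact_pos (by norm_num : (0:ℚ) < 2/3) k).ne'
  have h4 := (risingFact_pos (by norm_num : (0:ℚ) < 1) k).ne'
  have h5 := (risingFact_pos (by norm_num : (0:ℚ) < 1/6) k).ne'
  have h6 := (risingFact_pos (by norm_num : (0:ℚ) < 5/6) k).ne'
  have h7' : ((Nat.factorial k : ℚ)) ≠ 0 := by
    exact_mod_cast (Nat.factorial_pos k).ne'
  have h8 : (6*(k:ℚ)+1) ≠ 0 := by positivity
  simp only [one_pow]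
  rw [risingFact76]
  unfold u
  field_simp
  ring

end Final

end SixFive

/-- For every prime `p > 5`,
`-2p · ₆F₅[1/2,1/2,1/2,1/2,1/3,2/3; 1,1,1,1/6,5/6; 1]_{p-1}
  ≡ p · ₆F₅[1/2,1/2,1/2,1/2,1/3,2/3; 1,1,1,7/6,5/6; 1]_{p-1} (mod p)`. -/
theorem sixFfive_mod_p (p : ℕ) (hp : p.Prime) (hp5 : 5 < p) :
    padicNorm p
      ((-2 * (p : ℚ)) * (∑ k ∈ Finset.range p,
          (risingFact (1 / 2) k ^ 4 * risingFact (1 / 3) k * risingFact (2 / 3) k) /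
            (risingFact 1 k ^ 3 * risingFact (1 / 6) k * risingFact (5 / 6) k *
              (Nat.factorial k : ℚ)) * 1 ^ k) -
        (p : ℚ) * (∑ k ∈ Finset.range p,
          (risingFact (1 / 2) k ^ 4 * risingFact (1 / 3) k * risingFact (2 / 3) k) /
            (risingFact 1 k ^ 3 * risingFact (7 / 6) k * risingFact (5 / 6) k *
              (Nat.factorial k : ℚ)) * 1 ^ k)) ≤ (p : ℚ) ^ (-1 : ℤ) := by
  haveI : Fact p.Prime := ⟨hp⟩
  have h7 : 7 ≤ p := by
    have h6 : p ≠ 6 := by rintro rfl; norm_num at hp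
    omega
  have hpo : p % 2 = 1 := Nat.odd_iff.mp (hp.eq_two_or_odd'.resolve_left (by omega))
  have hsum : (-2 * (p : ℚ)) * (∑ k ∈ Finset.range p,
          (risingFact (1 / 2) k ^ 4 * risingFact (1 / 3) k * risingFact (2 / 3) k) /
            (risingFact 1 k ^ 3 * risingFact (1 / 6) k * risingFact (5 / 6) k *
              (Nat.factorial k : ℚ)) * 1 ^ k) -
        (p : ℚ) * (∑ k ∈ Finset.range p,
          (risingFact (1 / 2) k ^ 4 * risingFact (1 / 3) k * risingFact (2 / 3) k) /
            (risingFact 1 k ^ 3 * risingFact (7 / 6) k * risingFact (5 / 6) k *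
              (Nat.factorial k : ℚ)) * 1 ^ k)
      = -((p:ℚ) * ∑ k ∈ Finset.range p, SixFive.u k) := by
    rw [Finset.mul_sum, Finset.mul_sum, ← Finset.sum_sub_distrib]
    rw [Finset.mul_sum, ← Finset.sum_neg_distrib]
    apply Finset.sum_congr rfl
    intro k _
    rw [SixFive.term_ident h7 k]
    ring
  rw [hsum, padicNorm.neg, padicNorm.mul, padicNorm.padicNorm_p hp.one_lt]
  have hS := SixFive.sum_norm_le (p := p) h7 hpo
  calc (p:ℚ)⁻¹ * padicNorm p (∑ k ∈ Finset.range p, SixFive.u k)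
      ≤ (p:ℚ)⁻¹ * 1 := by
        apply mul_le_mul_of_nonneg_left hS (by positivity)
    _ = (p : ℚ) ^ (-1 : ℤ) := by
        rw [mul_one, zpow_neg, zpow_one]
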